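/- Let Z = {u_1 ≥ … ≥ u_m} satisfy u_i − u_{i+2} ≥ a for all i, with a > 0, let δ_i ∈ {0,1} with exactly l ones, and let Z' be the decreasing rearrangement of {u_i + δ_i a}. Let Ẑ be the multiset obtained from Z by adding a to each of the l largest entries, i.e., Ẑ = {u_1+a, …, u_l+a, u_{l+1}, …, u_m}. Then Z' ⊴ Ẑ in the dominance order, and Σ_{i} (i−1)·(entries of Ẑ in decreasing order) = binom(l,2)·a + Σ_i (i−1)u_i. -/

import Mathlib

/-- Decreasing enumeration of a multiset of natural numbers. -/
def dsort (M : Multiset ℕ) : List ℕ := (M.sort (· ≤ ·)).reverse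

private lemma sum_eq_range_getD (L : List ℕ) :
    L.sum = ∑ i ∈ Finset.range L.length, L.getD i 0 := by
  induction L with
  | nil => simp
  | cons x xs ih => simp [Finset.sum_range_succ', ih, add_comm]

private lemma sum_take_eq (L : List ℕ) (d : ℕ) :
    (L.take d).sum = ∑ i ∈ Finset.range (min d L.length), L.getD i 0 := by
  rw [sum_eq_range_getD, List.length_take]
  refine Finset.sum_congr rfl fun i hi => ?_
  have hi' : i < min d L.length := Finset.mem_range.mp hi
  have h1 : i < (L.take d).length := by simpa using hi'
  have h2 : i < L.length := lt_of_lt_of_le hi' (min_le_right _ _)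
  rw [List.getD_eq_getElem _ _ h1, List.getD_eq_getElem _ _ h2, List.getElem_take]

private lemma sum_if_lt (a lnum k : ℕ) :
    ∑ i ∈ Finset.range k, (if i < lnum then a else 0) = min k lnum * a := by
  induction k with
  | zero => simp
  | succ k ih =>
    rw [Finset.sum_range_succ, ih]
    split_ifs with h
    · have : min (k+1) lnum = min k lnum + 1 := by omega
      rw [this]; ring
    · have : min (k+1) lnum = min k lnum := by omega
      rw [this]; ring

private lemma take_sum_cons (x : ℕ) :
    ∀ (u : List ℕ) (c : ℕ), (∀ y ∈ u, y ≤ x) →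
      (u.take c).sum ≤ ((x :: u).take c).sum := by
  intro u
  induction u with
  | nil => intro c h; cases c <;> simp
  | cons b v ih =>
    intro c h
    match c with
    | 0 => simp
    | 1 => simpa using h b (List.mem_cons_self)
    | (j+2) =>
      have hv : ∀ y ∈ v, y ≤ x := fun y hy => h y (List.mem_cons_of_mem _ hy)
      have := ih (j+1) hv
      simp only [List.take_succ_cons, List.sum_cons] at this ⊢
      omega

private lemma sublist_sorted_sum_le :
    ∀ {t u : List ℕ}, t.Sublist u → List.Pairwise (· ≥ ·) u →
      t.sum ≤ (u.take t.length).sum := by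
  intro t u h
  induction h with
  | slnil => simp
  | @cons l₁ l₂ x h ih =>
    intro hs
    rcases List.pairwise_cons.mp hs with ⟨hx, hl⟩
    exact (ih hl).trans (take_sum_cons x l₂ _ fun y hy => hx y hy)
  | @cons_cons l₁ l₂ x h ih =>
    intro hs
    rcases List.pairwise_cons.mp hs with ⟨hx, hl⟩
    simp only [List.length_cons, List.take_succ_cons, List.sum_cons]
    exact Nat.add_le_add_left (ih hl) x

private lemma sublist_zipWith {α β γ : Type*} (f : α → β → γ) :
    ∀ (u : List α) (δ : List β) (t : List γ), t.Sublist (List.zipWith f u δ) →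
      ∃ u' δ', u'.Sublist u ∧ δ'.Sublist δ ∧ u'.length = δ'.length ∧
        t = List.zipWith f u' δ' := by
  intro u
  induction u with
  | nil =>
    intro δ t ht
    simp only [List.zipWith_nil_left, List.sublist_nil] at ht
    exact ⟨[], [], by simp [ht]⟩
  | cons x us ih =>
    intro δ t ht
    cases δ with
    | nil =>
      simp only [List.zipWith_nil_right, List.sublist_nil] at ht
      exact ⟨[], [], by simp [ht]⟩
    | cons y δs =>
      rw [List.zipWith_cons_cons] at ht
      cases ht with
      | cons _ h =>
        obtain ⟨u', δ', h1, h2, h3, h4⟩ := ih δs _ h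
        exact ⟨u', δ', h1.trans (List.sublist_cons_self _ _),
          h2.trans (List.sublist_cons_self _ _), h3, h4⟩
      | cons_cons _ h =>
        obtain ⟨u', δ', h1, h2, h3, h4⟩ := ih δs _ h
        exact ⟨x :: u', y :: δ', h1.cons₂ x, h2.cons₂ y, by simp [h3],
          by simp [h4]⟩

private lemma zipWith_sum (a : ℕ) :
    ∀ (u δ : List ℕ), u.length = δ.length →
      (List.zipWith (fun x y => x + y * a) u δ).sum = u.sum + a * δ.sum := by
  intro u
  induction u with
  | nil =>
    intro δ h
    have : δ = [] := List.eq_nil_of_length_eq_zero h.symm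
    simp [this]
  | cons x us ih =>
    intro δ h
    cases δ with
    | nil => simp at h
    | cons y δs =>
      simp only [List.zipWith_cons_cons, List.sum_cons, ih δs (by simpa using h)]
      ring

private lemma sum_le_length (t : List ℕ) (h : ∀ x ∈ t, x ≤ 1) :
    t.sum ≤ t.length := by
  induction t with
  | nil => simp
  | cons x xs ih =>
    simp only [List.sum_cons, List.length_cons]
    have := h x (List.mem_cons_self)
    have := ih fun y hy => h y (List.mem_cons_of_mem _ hy)
    omega

private lemma hat_take_sum (a lnum : ℕ) (u : List ℕ) (hlm : lnum ≤ u.length) (d : ℕ) :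
    ((u.mapIdx fun i x => if i < lnum then x + a else x).take d).sum
      = (u.take d).sum + a * min d lnum := by
  rw [sum_take_eq, sum_take_eq, List.length_mapIdx]
  have key : ∀ i ∈ Finset.range (min d u.length),
      (u.mapIdx fun i x => if i < lnum then x + a else x).getD i 0
        = u.getD i 0 + (if i < lnum then a else 0) := by
    intro i hi
    have hi' : i < u.length := lt_of_lt_of_le (Finset.mem_range.mp hi) (min_le_right _ _)
    have hi'' : i < (u.mapIdx fun i x => if i < lnum then x + a else x).length := by
      simpa using hi'
    rw [List.getD_eq_getElem _ _ hi'', List.getD_eq_getElem _ _ hi', List.getElem_mapIdx]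
    split_ifs <;> simp
  rw [Finset.sum_congr rfl key, Finset.sum_add_distrib, sum_if_lt]
  have : min (min d u.length) lnum = min d lnum := by omega
  rw [this, Nat.mul_comm]

theorem pieri_dominance_and_weighted_sum (a lnum : ℕ) (ha : 0 < a)
    (u δ : List ℕ)
    (hu : List.Pairwise (· ≥ ·) u)
    (hgap : ∀ i, i + 2 < u.length → u.getD (i + 2) 0 + a ≤ u.getD i 0)
    (hδlen : δ.length = u.length) (hδ : ∀ x ∈ δ, x ≤ 1) (hδsum : δ.sum = lnum) :
    (∀ d,
      ((dsort (↑(List.zipWith (fun x y => x + y * a) u δ) : Multiset ℕ)).take d).sum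
        ≤ (((u.mapIdx fun i x => if i < lnum then x + a else x).take d).sum)) ∧
    (∑ i ∈ Finset.range u.length,
        i * (u.mapIdx fun i x => if i < lnum then x + a else x).getD i 0
      = Nat.choose lnum 2 * a + ∑ i ∈ Finset.range u.length, i * u.getD i 0) := by
  have hlm : lnum ≤ u.length := by
    rw [← hδsum, ← hδlen]; exact sum_le_length δ hδ
  constructor
  · intro d
    set L : List ℕ := List.zipWith (fun x y => x + y * a) u δ with hL
    -- dsort ↑L is a permutation of L
    have hperm : (dsort (↑L : Multiset ℕ)).Perm L := by
      have h1 : ((↑L : Multiset ℕ).sort (· ≤ ·)).Perm L :=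
        Multiset.coe_eq_coe.mp (Multiset.sort_eq _ _)
      exact (List.reverse_perm _).trans h1
    have hsub : ((dsort (↑L : Multiset ℕ)).take d).Subperm L :=
      ((List.take_sublist d _).subperm).trans hperm.subperm
    obtain ⟨t, htp, hts⟩ := hsub
    obtain ⟨u', δ', hu', hδ', hlen, rfl⟩ := sublist_zipWith _ u δ t hts
    have hsum := zipWith_sum a u' δ' hlen
    have hc : (List.zipWith (fun x y => x + y * a) u' δ').length = u'.length := by
      simp [hlen]
    -- bound the u'-part
    have hub : u'.sum ≤ (u.take u'.length).sum := sublist_sorted_sum_le hu' hu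
    -- bound the δ'-part
    have hδb : δ'.sum ≤ min u'.length lnum := by
      have h1 : δ'.sum ≤ δ'.length := sum_le_length δ' fun x hx => hδ x (hδ'.subset hx)
      have h2 : δ'.sum ≤ lnum := by
        rw [← hδsum]
        exact hδ'.sum_le_sum (fun x _ => Nat.zero_le x)
      omega
    have hcd : u'.length ≤ d := by
      have := htp.length_eq
      rw [hc] at this
      calc u'.length = ((dsort (↑L : Multiset ℕ)).take d).length := this
        _ ≤ d := by simp [List.length_take]
    have hmono : (u.take u'.length).sum ≤ (u.take d).sum := by
      have : u.take d = u.take u'.length ++ (u.drop u'.length).take (d - u'.length) := by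
        rw [← List.take_add]; congr 1; omega
      rw [this, List.sum_append]; omega
    have hLHS : ((dsort (↑L : Multiset ℕ)).take d).sum
        = u'.sum + a * δ'.sum := by rw [← htp.sum_eq, hsum]
    rw [hLHS, hat_take_sum a lnum u hlm d]
    have : a * δ'.sum ≤ a * min d lnum := by
      have : δ'.sum ≤ min d lnum := by omega
      exact Nat.mul_le_mul_left a this
    omega
  · have key : ∀ i ∈ Finset.range u.length,
        i * (u.mapIdx fun i x => if i < lnum then x + a else x).getD i 0
          = i * u.getD i 0 + (if i < lnum then i * a else 0) := by
      intro i hi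
      have hi' : i < u.length := Finset.mem_range.mp hi
      have hi'' : i < (u.mapIdx fun i x => if i < lnum then x + a else x).length := by
        simpa using hi'
      rw [List.getD_eq_getElem _ _ hi'', List.getD_eq_getElem _ _ hi', List.getElem_mapIdx]
      split_ifs <;> ring
    rw [Finset.sum_congr rfl key, Finset.sum_add_distrib]
    have h2 : ∑ i ∈ Finset.range u.length, (if i < lnum then i * a else 0)
        = Nat.choose lnum 2 * a := by
      rw [← Finset.sum_subset (Finset.range_subset_range.mpr hlm)
        (fun x _ hx => by simp [Finset.mem_range] at hx; simp [hx])]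
      · have : ∀ i ∈ Finset.range lnum, (if i < lnum then i * a else 0) = i * a := by
          intro i hi
          simp [Finset.mem_range.mp hi]
        rw [Finset.sum_congr rfl this, ← Finset.sum_mul, Finset.sum_range_id,
          Nat.choose_two_right]
    omega
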